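/- Let n ≥ 1, and for each i ∈ {1,...,n} let D_i ∈ {0,1}, Y_i ∈ ℝ, and X_i ∈ ℝ^d. Let w_{i←j} ∈ ℝ be given for all pairs (i,j) with D_i + D_j = 1, and let μ̂_0, μ̂_1 : ℝ^d → ℝ. Define R̂_i = Y_i − μ̂_{D_i}(X_i), imputed values Ŷ_i(0) = Y_i if D_i = 0 and Ŷ_i(0) = Σ_{j : D_j = 0} w_{i←j}(Y_j + μ̂_0(X_i) − μ̂_0(X_j)) if D_i = 1, and symmetrically Ŷ_i(1) = Y_i if D_i = 1 and Ŷ_i(1) = Σ_{j : D_j = 1} w_{i←j}(Y_j + μ̂_1(X_i) − μ̂_1(X_j)) if D_i = 0. Let τ̂_w = (1/n) Σ_i [Ŷ_i(1) − Ŷ_i(0)] and τ̂^reg = (1/n) Σ_i [μ̂_1(X_i) − μ̂_0(X_i)]. Then τ̂_w = τ̂^reg + (1/n) Σ_{i : D_i = 1} (1 + Σ_{j : D_j = 0} w_{j←i}) R̂_i − (1/n) Σ_{i : D_i = 0} (1 + Σ_{j : D_j = 1} w_{j←i}) R̂_i + (1/n) Σ_i (2D_i − 1)(1 − Σ_{j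 : D_j = 1 − D_i} w_{i←j}) μ̂_{1−D_i}(X_i). -/
import Mathlib


open Finset

/-- Lemma 1 of Lin & Han (2022): AIPW decomposition of the regression-adjusted
imputation estimator of the ATE. -/
theorem regression_adjusted_imputation_aipw_decomposition
    (n d : ℕ) (hn : 1 ≤ n)
    (D : Fin n → ℕ) (hD : ∀ i, D i = 0 ∨ D i = 1)
    (Y : Fin n → ℝ) (X : Fin n → EuclideanSpace ℝ (Fin d))
    (w : Fin n → Fin n → ℝ)
    (μ : ℕ → EuclideanSpace ℝ (Fin d) → ℝ)
    (R : Fin n → ℝ) (hR : ∀ i, R i = Y i - μ (D i) (X i))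
    (Yhat0 Yhat1 : Fin n → ℝ)
    (hY0 : ∀ i, Yhat0 i = if D i = 0 then Y i else
      ∑ j ∈ univ.filter (fun j => D j = 0), w i j * (Y j + μ 0 (X i) - μ 0 (X j)))
    (hY1 : ∀ i, Yhat1 i = if D i = 1 then Y i else
      ∑ j ∈ univ.filter (fun j => D j = 1), w i j * (Y j + μ 1 (X i) - μ 1 (X j)))
    (τw τreg : ℝ)
    (hτw : τw = (1 / n) * ∑ i, (Yhat1 i - Yhat0 i))
    (hτreg : τreg = (1 / n) * ∑ i, (μ 1 (X i) - μ 0 (X i))) :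
    τw = τreg
      + (1 / n) * ∑ i ∈ univ.filter (fun i => D i = 1),
          (1 + ∑ j ∈ univ.filter (fun j => D j = 0), w j i) * R i
      - (1 / n) * ∑ i ∈ univ.filter (fun i => D i = 0),
          (1 + ∑ j ∈ univ.filter (fun j => D j = 1), w j i) * R i
      + (1 / n) * ∑ i, (2 * (D i : ℝ) - 1)
          * (1 - ∑ j ∈ univ.filter (fun j => D j = 1 - D i), w i j)
          * μ (1 - D i) (X i) := by
  have hsplit : ∀ f : Fin n → ℝ, ∑ i, f i =
      ∑ i ∈ univ.filter (fun i => D i = 1), f i +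
      ∑ i ∈ univ.filter (fun i => D i = 0), f i := by
    intro f
    have hfe : (univ.filter fun i => ¬ D i = 1) = univ.filter (fun i => D i = 0) := by
      ext x
      simp only [mem_filter, mem_univ, true_and]
      rcases hD x with h | h <;> simp [h]
    rw [← Finset.sum_filter_add_sum_filter_not univ (fun i => D i = 1) f, hfe]
  have h1 : ∀ i ∈ univ.filter (fun i => D i = 1),
      Yhat1 i - Yhat0 i =
        R i + μ 1 (X i)
          - (∑ j ∈ univ.filter (fun j => D j = 0), w i j * R j)
          - (∑ j ∈ univ.filter (fun j => D j = 0), w i j) * μ 0 (X i) := by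
    intro i hi
    simp only [mem_filter, mem_univ, true_and] at hi
    rw [hY1, hY0, if_pos hi, if_neg (by omega)]
    have hinner : ∑ j ∈ univ.filter (fun j => D j = 0), w i j * (Y j + μ 0 (X i) - μ 0 (X j))
        = ∑ j ∈ univ.filter (fun j => D j = 0), (w i j * R j + w i j * μ 0 (X i)) := by
      refine Finset.sum_congr rfl fun j hj => ?_
      simp only [mem_filter, mem_univ, true_and] at hj
      rw [hR j, hj]; ring
    rw [hinner, Finset.sum_add_distrib, ← Finset.sum_mul, hR i, hi]
    ring
  have h0 : ∀ i ∈ univ.filter (fun i => D i = 0),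
      Yhat1 i - Yhat0 i =
        (∑ j ∈ univ.filter (fun j => D j = 1), w i j * R j)
          + (∑ j ∈ univ.filter (fun j => D j = 1), w i j) * μ 1 (X i)
          - R i - μ 0 (X i) := by
    intro i hi
    simp only [mem_filter, mem_univ, true_and] at hi
    rw [hY1, hY0, if_neg (by omega), if_pos hi]
    have hinner : ∑ j ∈ univ.filter (fun j => D j = 1), w i j * (Y j + μ 1 (X i) - μ 1 (X j))
        = ∑ j ∈ univ.filter (fun j => D j = 1), (w i j * R j + w i j * μ 1 (X i)) := by
      refine Finset.sum_congr rfl fun j hj => ?_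
      simp only [mem_filter, mem_univ, true_and] at hj
      rw [hR j, hj]; ring
    rw [hinner, Finset.sum_add_distrib, ← Finset.sum_mul, hR i, hi]
    ring
  have hC1 : ∀ i ∈ univ.filter (fun i => D i = 1),
      (2 * (D i : ℝ) - 1)
          * (1 - ∑ j ∈ univ.filter (fun j => D j = 1 - D i), w i j)
          * μ (1 - D i) (X i)
      = μ 0 (X i) - (∑ j ∈ univ.filter (fun j => D j = 0), w i j) * μ 0 (X i) := by
    intro i hi
    simp only [mem_filter, mem_univ, true_and] at hi
    simp only [hi, Nat.sub_self, Nat.cast_one]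
    ring
  have hC0 : ∀ i ∈ univ.filter (fun i => D i = 0),
      (2 * (D i : ℝ) - 1)
          * (1 - ∑ j ∈ univ.filter (fun j => D j = 1 - D i), w i j)
          * μ (1 - D i) (X i)
      = (∑ j ∈ univ.filter (fun j => D j = 1), w i j) * μ 1 (X i) - μ 1 (X i) := by
    intro i hi
    simp only [mem_filter, mem_univ, true_and] at hi
    simp only [hi, Nat.sub_zero, Nat.cast_zero]
    ring
  have eA : ∑ i ∈ univ.filter (fun i => D i = 1),
        (1 + ∑ j ∈ univ.filter (fun j => D j = 0), w j i) * R i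
      = (∑ i ∈ univ.filter (fun i => D i = 1), R i)
        + ∑ i ∈ univ.filter (fun i => D i = 0),
            ∑ j ∈ univ.filter (fun j => D j = 1), w i j * R j := by
    have : ∀ i ∈ univ.filter (fun i => D i = 1),
        (1 + ∑ j ∈ univ.filter (fun j => D j = 0), w j i) * R i
        = R i + ∑ j ∈ univ.filter (fun j => D j = 0), w j i * R i := by
      intro i _
      rw [add_mul, one_mul, Finset.sum_mul]
    rw [Finset.sum_congr rfl this, Finset.sum_add_distrib, Finset.sum_comm]
  have eB : ∑ i ∈ univ.filter (fun i => D i = 0),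
        (1 + ∑ j ∈ univ.filter (fun j => D j = 1), w j i) * R i
      = (∑ i ∈ univ.filter (fun i => D i = 0), R i)
        + ∑ i ∈ univ.filter (fun i => D i = 1),
            ∑ j ∈ univ.filter (fun j => D j = 0), w i j * R j := by
    have : ∀ i ∈ univ.filter (fun i => D i = 0),
        (1 + ∑ j ∈ univ.filter (fun j => D j = 1), w j i) * R i
        = R i + ∑ j ∈ univ.filter (fun j => D j = 1), w j i * R i := by
      intro i _
      rw [add_mul, one_mul, Finset.sum_mul]
    rw [Finset.sum_congr rfl this, Finset.sum_add_distrib, Finset.sum_comm]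
  have key : ∑ i, (Yhat1 i - Yhat0 i)
      = (∑ i, (μ 1 (X i) - μ 0 (X i)))
        + (∑ i ∈ univ.filter (fun i => D i = 1),
            (1 + ∑ j ∈ univ.filter (fun j => D j = 0), w j i) * R i)
        - (∑ i ∈ univ.filter (fun i => D i = 0),
            (1 + ∑ j ∈ univ.filter (fun j => D j = 1), w j i) * R i)
        + (∑ i, (2 * (D i : ℝ) - 1)
            * (1 - ∑ j ∈ univ.filter (fun j => D j = 1 - D i), w i j)
            * μ (1 - D i) (X i)) := by
    rw [hsplit (fun i => Yhat1 i - Yhat0 i),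
        Finset.sum_congr rfl h1, Finset.sum_congr rfl h0,
        hsplit (fun i => μ 1 (X i) - μ 0 (X i)),
        hsplit (fun i => (2 * (D i : ℝ) - 1)
            * (1 - ∑ j ∈ univ.filter (fun j => D j = 1 - D i), w i j)
            * μ (1 - D i) (X i)),
        Finset.sum_congr rfl hC1, Finset.sum_congr rfl hC0, eA, eB]
    simp only [Finset.sum_add_distrib, Finset.sum_sub_distrib]
    ring
  rw [hτw, hτreg, key]
  ring
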